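/- Let X ~ MLFD(λ, α, β) with λ, α, β > 0. If λ < Γ(α+β)/Γ(β), then the pmf is non-increasing, i.e., P(X = k+1) ≤ P(X = k) for all k ≥ 0; in particular the mode is at 0. -/
import Mathlib


open Real

noncomputable def mittagLeffler (α β z : ℝ) : ℝ :=
  ∑' k : ℕ, z ^ k / Real.Gamma (α * k + β)

/-- The pmf of the Mittag-Leffler function distribution MLFD(λ, α, β). -/
noncomputable def mlfdPmf (lam α β : ℝ) (k : ℕ) : ℝ :=
  lam ^ k / (Real.Gamma (α * k + β) * mittagLeffler α β lam)

lemma gamma_ratio_mono {α β y : ℝ} (hα : 0 < α) (hβ : 0 < β) (hy : β ≤ y) :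
    Real.Gamma (α + β) / Real.Gamma β ≤ Real.Gamma (α + y) / Real.Gamma y := by
  rcases eq_or_lt_of_le hy with rfl | hlt
  · exact le_rfl
  have hconv := Real.convexOn_log_Gamma
  have hy0 : (0:ℝ) < y := hβ.trans hlt
  have hβm : β ∈ Set.Ioi (0:ℝ) := hβ
  have hym : y ∈ Set.Ioi (0:ℝ) := hy0
  have hβα : β + α ∈ Set.Ioi (0:ℝ) := by simp [Set.mem_Ioi]; linarith
  have hyα : y + α ∈ Set.Ioi (0:ℝ) := by simp [Set.mem_Ioi]; linarith
  set f := Real.log ∘ Real.Gamma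
  have s1 : (f (β+α) - f β)/((β+α)-β) ≤ (f (y+α) - f β)/((y+α)-β) :=
    hconv.secant_mono hβm hβα hyα (by linarith) (by linarith) (by linarith)
  have s2 : (f β - f (y+α))/(β-(y+α)) ≤ (f y - f (y+α))/(y-(y+α)) :=
    hconv.secant_mono hyα hβm hym (by linarith) (by linarith) (by linarith)
  have e1 : (f β - f (y+α))/(β-(y+α)) = (f (y+α) - f β)/((y+α)-β) := by
    rw [← neg_div_neg_eq]; ring_nf
  have key : f (β+α) - f β ≤ f (y+α) - f y := by
    have h1 : (f (β+α) - f β)/α ≤ (f (y+α) - f β)/((y+α)-β) := by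
      simpa using s1
    have h2 : (f (y+α) - f β)/((y+α)-β) ≤ (f (y+α) - f y)/α := by
      rw [← e1]
      calc (f β - f (y+α))/(β-(y+α)) ≤ (f y - f (y+α))/(y-(y+α)) := s2
        _ = (f (y+α) - f y)/α := by rw [← neg_div_neg_eq]; ring_nf
    have := h1.trans h2
    exact (div_le_div_iff_of_pos_right hα).mp this
  have gβ : 0 < Real.Gamma β := Real.Gamma_pos_of_pos hβ
  have gy : 0 < Real.Gamma y := Real.Gamma_pos_of_pos hy0
  have gβα : 0 < Real.Gamma (α+β) := Real.Gamma_pos_of_pos (by linarith)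
  have gyα : 0 < Real.Gamma (α+y) := Real.Gamma_pos_of_pos (by linarith)
  rw [div_le_div_iff₀ gβ gy]
  have key' : Real.log (Real.Gamma (α+β)) - Real.log (Real.Gamma β)
      ≤ Real.log (Real.Gamma (α+y)) - Real.log (Real.Gamma y) := by
    have := key
    simp only [f, Function.comp] at this
    rw [add_comm β α, add_comm y α] at this
    exact this
  have : Real.log (Real.Gamma (α+β) * Real.Gamma y) ≤ Real.log (Real.Gamma (α+y) * Real.Gamma β) := by
    rw [Real.log_mul gβα.ne' gy.ne', Real.log_mul gyα.ne' gβ.ne']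
    linarith
  exact (Real.log_le_log_iff (by positivity) (by positivity)).mp this

/-- If `λ < Γ(α+β)/Γ(β)` the pmf is non-increasing, with mode at 0. -/
theorem mlfd_mode_at_zero (lam α β : ℝ) (hlam : 0 < lam) (hα : 0 < α) (hβ : 0 < β)
    (h : lam < Real.Gamma (α + β) / Real.Gamma β) :
    (∀ k : ℕ, mlfdPmf lam α β (k + 1) ≤ mlfdPmf lam α β k) ∧
      (∀ k : ℕ, mlfdPmf lam α β k ≤ mlfdPmf lam α β 0) := by
  have hstep : ∀ k : ℕ, mlfdPmf lam α β (k + 1) ≤ mlfdPmf lam α β k := by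
    intro k
    set M := mittagLeffler α β lam with hM
    rcases eq_or_ne M 0 with h0 | hne
    · simp [mlfdPmf, ← hM, h0]
    · have hMnn : 0 ≤ M := by
        rw [hM, mittagLeffler]
        exact tsum_nonneg fun n => div_nonneg (pow_nonneg hlam.le n)
          (Real.Gamma_pos_of_pos (by positivity : (0:ℝ) < α * n + β)).le
      have hMpos : 0 < M := lt_of_le_of_ne hMnn (Ne.symm hne)
      have hGk : 0 < Real.Gamma (α * k + β) := Real.Gamma_pos_of_pos (by positivity)
      have hGk1 : 0 < Real.Gamma (α + (α * k + β)) := Real.Gamma_pos_of_pos (by positivity)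
      have hy : β ≤ α * k + β := le_add_of_nonneg_left (by positivity)
      have key : lam * Real.Gamma (α * k + β) ≤ Real.Gamma (α + (α * k + β)) :=
        (le_div_iff₀ hGk).mp (h.le.trans (gamma_ratio_mono hα hβ hy))
      unfold mlfdPmf
      rw [← hM]
      have hcast : α * ((k + 1 : ℕ) : ℝ) + β = α + (α * k + β) := by push_cast; ring
      rw [hcast, div_le_div_iff₀ (by positivity) (by positivity)]
      calc lam ^ (k + 1) * (Real.Gamma (α * k + β) * M)
          = (lam * Real.Gamma (α * k + β)) * (lam ^ k * M) := by rw [pow_succ]; ring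
        _ ≤ Real.Gamma (α + (α * k + β)) * (lam ^ k * M) :=
            mul_le_mul_of_nonneg_right key (by positivity)
        _ = lam ^ k * (Real.Gamma (α + (α * k + β)) * M) := by ring
  refine ⟨hstep, fun k => ?_⟩
  induction k with
  | zero => exact le_rfl
  | succ n ih => exact (hstep n).trans ih
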